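/- Let s be a unitary automorphism of (V,h). Assume that the only s-stable isotropic subspace of V is the zero subspace, and that there is no orthogonal decomposition V = V₁ ⊕ V₂ with V₁ and V₂ both nonzero s-stable subspaces. Let E = K[s] be the K-subalgebra of End_K(V) generated by s (which is a field). Then V, regarded as a vector space over E via evaluation of endomorphisms, is one-dimensional; equivalently, the dimension of V over K equals the dimension of E over K. -/

import Mathlib

set_option maxHeartbeats 1000000
set_option synthInstance.maxHeartbeats 400000


/-- Under the hypotheses of Lemma `inv` in the paper, `V` is one-dimensional as a vector
space over `E = K[s]` (acting by evaluation of endomorphisms); equivalently,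
`dim_K V = dim_K E`. -/
theorem dim_one_over_adjoin
    (q : ℕ) (hq : IsPrimePow q)
    (K : Type*) [Field K] [Fintype K] (hK : Fintype.card K = q ^ 2)
    (V : Type*) [AddCommGroup V] [Module K V] [FiniteDimensional K V] [Nontrivial V]
    (h : V → V → K)
    (h_add_left : ∀ x x' y : V, h (x + x') y = h x y + h x' y)
    (h_add_right : ∀ x y y' : V, h x (y + y') = h x y + h x y')
    (h_smul_left : ∀ (c : K) (x y : V), h (c • x) y = c ^ q * h x y)
    (h_smul_right : ∀ (c : K) (x y : V), h x (c • y) = c * h x y)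
    (h_symm : ∀ x y : V, h y x = (h x y) ^ q)
    (h_nondeg : ∀ x : V, (∀ y : V, h x y = 0) → x = 0)
    (s : V ≃ₗ[K] V)
    (hs : ∀ x y : V, h (s x) (s y) = h x y)
    (hiso : ∀ W : Submodule K V, (∀ w ∈ W, s w ∈ W) →
      (∀ w ∈ W, ∀ w' ∈ W, h w w' = 0) → W = ⊥)
    (hdec : ¬ ∃ V₁ V₂ : Submodule K V, V₁ ≠ ⊥ ∧ V₂ ≠ ⊥ ∧
      (∀ v ∈ V₁, s v ∈ V₁) ∧ (∀ v ∈ V₂, s v ∈ V₂) ∧ IsCompl V₁ V₂ ∧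
      (∀ x ∈ V₁, ∀ y ∈ V₂, h x y = 0)) :
    -- `V` is spanned over `E = K[s]` by a single vector:
    (∃ v : V, ∀ w : V, ∃ f ∈ Algebra.adjoin K {s.toLinearMap}, f v = w) ∧
    -- equivalently, `dim_K V = dim_K E`:
    Module.finrank K V = Module.finrank K ↥(Algebra.adjoin K {s.toLinearMap}) := by
  classical
  -- basic consequences of the axioms for h
  have hz_left : ∀ y : V, h 0 y = 0 := by
    intro y
    have := h_add_left 0 0 y
    rw [add_zero] at this
    exact right_eq_add.mp this
  have hz_right : ∀ x : V, h x 0 = 0 := by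
    intro x
    have := h_add_right x 0 0
    rw [add_zero] at this
    exact right_eq_add.mp this
  have h_sub_left : ∀ x x' y : V, h (x - x') y = h x y - h x' y := by
    intro x x' y
    have := h_add_left (x - x') x' y
    rw [sub_add_cancel] at this
    rw [this]
    ring
  -- the algebra A = K[s]
  set A : Subalgebra K (Module.End K V) := Algebra.adjoin K {s.toLinearMap} with hA
  have hsA : s.toLinearMap ∈ A := Algebra.self_mem_adjoin_singleton K _
  -- elements of A commute with s
  have hcomm_s : ∀ f ∈ A, Commute s.toLinearMap f := by
    intro f hf
    induction hf using Algebra.adjoin_induction with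
    | mem x hx => rw [Set.mem_singleton_iff] at hx; subst hx; exact Commute.refl _
    | algebraMap r => exact Algebra.commute_algebraMap_right r _
    | add x y hx hy ihx ihy => exact ihx.add_right ihy
    | mul x y hx hy ihx ihy => exact ihx.mul_right ihy
  -- elements of A commute with each other
  have hcomm : ∀ f ∈ A, ∀ g ∈ A, Commute f g := by
    intro f hf g hg
    induction hg using Algebra.adjoin_induction with
    | mem x hx => rw [Set.mem_singleton_iff] at hx; subst hx; exact (hcomm_s f hf).symm
    | algebraMap r => exact Algebra.commute_algebraMap_right r _
    | add x y hx hy ihx ihy => exact ihx.add_right ihy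
    | mul x y hx hy ihx ihy => exact ihx.mul_right ihy
  haveI : Finite V := Module.finite_of_finite K
  haveI : Fintype V := Fintype.ofFinite V
  obtain ⟨v, hv⟩ := exists_ne (0 : V)
  -- W = A • v
  set ev : Module.End K V →ₗ[K] V :=
    { toFun := fun f => f v
      map_add' := fun f g => rfl
      map_smul' := fun c f => rfl } with hev
  set W : Submodule K V := (Subalgebra.toSubmodule A).map ev with hW
  have memW : ∀ w : V, w ∈ W ↔ ∃ f ∈ A, f v = w := by
    intro w
    simp [hW, Submodule.mem_map, Subalgebra.mem_toSubmodule, hev]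
  have hvW : v ∈ W := (memW v).2 ⟨1, one_mem A, rfl⟩
  have hWne : W ≠ ⊥ := by
    intro hbot
    exact hv (by simpa [hbot] using hvW)
  -- W is s-stable
  have hWs : ∀ w ∈ W, s w ∈ W := by
    intro w hw
    obtain ⟨f, hf, rfl⟩ := (memW w).1 hw
    exact (memW _).2 ⟨s.toLinearMap * f, mul_mem hsA hf, rfl⟩
  -- s maps W onto W
  have hWmap : Submodule.map s.toLinearMap W = W := by
    apply Submodule.eq_of_le_of_finrank_le
    · intro x hx
      obtain ⟨w, hw, rfl⟩ := Submodule.mem_map.mp hx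
      exact hWs w hw
    · rw [show Submodule.map s.toLinearMap W = Submodule.map (s : V →ₗ[K] V) W from rfl,
        LinearEquiv.finrank_map_eq]
  have hWsurj : ∀ w ∈ W, ∃ w' ∈ W, s w' = w := by
    intro w hw
    have : w ∈ Submodule.map s.toLinearMap W := hWmap.ge hw
    obtain ⟨w', hw', rfl⟩ := this
    exact ⟨w', hw', rfl⟩
  -- the radical of W is trivial
  have hN : ∀ x ∈ W, (∀ w ∈ W, h x w = 0) → x = 0 := by
    intro x hxW hx
    set N : Submodule K V :=
      { carrier := {y | y ∈ W ∧ ∀ w ∈ W, h y w = 0}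
        zero_mem' := ⟨W.zero_mem, fun w _ => hz_left w⟩
        add_mem' := by
          rintro a b ⟨haW, ha⟩ ⟨hbW, hb⟩
          exact ⟨W.add_mem haW hbW, fun w hw => by rw [h_add_left, ha w hw, hb w hw, add_zero]⟩
        smul_mem' := by
          rintro c a ⟨haW, ha⟩
          exact ⟨W.smul_mem c haW, fun w hw => by rw [h_smul_left, ha w hw, mul_zero]⟩ } with hNdef
    have hNbot : N = ⊥ := by
      apply hiso
      · rintro y ⟨hyW, hy⟩
        refine ⟨hWs y hyW, fun w hw => ?_⟩
        obtain ⟨w', hw', rfl⟩ := hWsurj w hw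
        rw [hs]
        exact hy w' hw'
      · rintro y ⟨hyW, hy⟩ y' ⟨hy'W, _⟩
        exact hy y' hy'W
    have : x ∈ N := ⟨hxW, hx⟩
    rw [hNbot] at this
    exact this
  -- the orthogonal complement of W
  set W' : Submodule K V :=
    { carrier := {y | ∀ w ∈ W, h w y = 0}
      zero_mem' := fun w _ => hz_right w
      add_mem' := by
        intro a b ha hb w hw
        rw [h_add_right, ha w hw, hb w hw, add_zero]
      smul_mem' := by
        intro c a ha w hw
        rw [h_smul_right, ha w hw, mul_zero] } with hW'
  have memW' : ∀ y : V, y ∈ W' ↔ ∀ w ∈ W, h w y = 0 := fun y => Iff.rfl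
  -- W ⊓ W' = ⊥
  have hdisj : Disjoint W W' := by
    rw [Submodule.disjoint_def]
    intro x hxW hxW'
    apply hN x hxW
    intro w hw
    rw [h_symm, (memW' x).1 hxW' w hw, zero_pow]
    exact hq.pos.ne'
  -- counting argument : the map x ↦ h x · from W to its dual is bijective
  have key : ∀ y : V, ∃ x ∈ W, ∀ w ∈ W, h x w = h y w := by
    haveI : Fintype ↥W := Fintype.ofFinite _
    haveI : Finite (↥W →ₗ[K] K) :=
      Finite.of_injective (fun f => (f : ↥W → K)) DFunLike.coe_injective
    haveI : Fintype (↥W →ₗ[K] K) := Fintype.ofFinite _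
    -- consider Φ : W → (W →ₗ[K] K)
    set Φ : W → (W →ₗ[K] K) := fun x =>
      { toFun := fun w => h x.1 w.1
        map_add' := fun a b => h_add_right _ _ _
        map_smul' := fun c a => h_smul_right c _ _ } with hΦ
    have hΦinj : Function.Injective Φ := by
      intro a b hab
      have : ∀ w ∈ W, h (a.1 - b.1) w = 0 := by
        intro w hw
        rw [h_sub_left]
        have := congrArg (fun f => f ⟨w, hw⟩) hab
        simp only [hΦ, LinearMap.coe_mk, AddHom.coe_mk] at this
        rw [this, sub_self]
      have := hN _ (W.sub_mem a.2 b.2) this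
      exact Subtype.ext (sub_eq_zero.mp this)
    have hcard : Fintype.card W = Fintype.card (W →ₗ[K] K) := by
      rw [Module.card_eq_pow_finrank (K := K) (V := W),
        Module.card_eq_pow_finrank (K := K) (V := (W →ₗ[K] K))]
      congr 1
      exact (Subspace.dual_finrank_eq (K := K) (V := W)).symm
    have hΦbij : Function.Bijective Φ :=
      (Fintype.bijective_iff_injective_and_card Φ).2 ⟨hΦinj, hcard⟩
    intro y
    obtain ⟨x, hx⟩ := hΦbij.2
      { toFun := fun w => h y w.1
        map_add' := fun a b => h_add_right _ _ _
        map_smul' := fun c a => h_smul_right c _ _ }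
    refine ⟨x.1, x.2, fun w hw => ?_⟩
    have := congrArg (fun f => f ⟨w, hw⟩) hx
    simpa [hΦ] using this
  -- W ⊔ W' = ⊤
  have hcodisj : Codisjoint W W' := by
    rw [codisjoint_iff_le_sup]
    intro y _
    obtain ⟨x, hxW, hx⟩ := key y
    have hyx : y - x ∈ W' := by
      intro w hw
      rw [h_symm, h_sub_left, hx w hw, sub_self, zero_pow hq.pos.ne']
    have : y = x + (y - x) := by abel
    rw [this]
    exact Submodule.add_mem_sup hxW hyx
  have hcompl : IsCompl W W' := ⟨hdisj, hcodisj⟩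
  -- W' is s-stable
  have hW's : ∀ y ∈ W', s y ∈ W' := by
    intro y hy w hw
    obtain ⟨w', hw', rfl⟩ := hWsurj w hw
    rw [hs]
    exact hy w' hw'
  -- conclude W' = ⊥
  have hW'bot : W' = ⊥ := by
    by_contra hne
    exact hdec ⟨W, W', hWne, hne, hWs, hW's, hcompl, fun x hx y hy =>
      (memW' y).1 hy x hx⟩
  have hWtop : W = ⊤ := by
    have := hcompl.codisjoint
    rw [hW'bot, codisjoint_bot] at this
    exact this
  constructor
  · exact ⟨v, fun w => (memW w).1 (hWtop ▸ Submodule.mem_top)⟩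
  · -- evaluation at v is a K-linear bijection A ≃ V
    set φ : A →ₗ[K] V := ev.comp (Subalgebra.val A).toLinearMap with hφ
    have hφinj : Function.Injective φ := by
      rw [injective_iff_map_eq_zero]
      intro f hf0
      have hfv : (f : Module.End K V) v = 0 := hf0
      have : ∀ w : V, (f : Module.End K V) w = 0 := by
        intro w
        obtain ⟨g, hg, rfl⟩ := (memW w).1 (hWtop ▸ Submodule.mem_top)
        have : (f : Module.End K V) * g = g * (f : Module.End K V) := hcomm _ f.2 g hg
        calc (f : Module.End K V) (g v) = ((f : Module.End K V) * g) v := rfl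
          _ = (g * (f : Module.End K V)) v := by rw [this]
          _ = g ((f : Module.End K V) v) := rfl
          _ = 0 := by rw [hfv, map_zero]
      exact Subtype.ext (LinearMap.ext this)
    have hφsurj : Function.Surjective φ := by
      intro w
      obtain ⟨g, hg, hgv⟩ := (memW w).1 (hWtop ▸ Submodule.mem_top)
      exact ⟨⟨g, hg⟩, hgv⟩
    exact (LinearEquiv.ofBijective φ ⟨hφinj, hφsurj⟩).finrank_eq.symm
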